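/- Let E be a real inner product space and let h : E → ℝ be a convex differentiable function with h(0) = 0 whose gradient ∇h is 1-Lipschitz. Then for every x ∈ E, setting x⁺ = x − ∇h(x), one has 2·h(x⁺) + ‖x⁺‖² ≤ ‖x‖². -/

import Mathlib

open InnerProductSpace

section Aux

variable {E : Type*} [NormedAddCommGroup E] [InnerProductSpace ℝ E] [CompleteSpace E]

local notation "⟪" x ", " y "⟫" => @inner ℝ _ _ x y

lemma line_hasDerivAt (h : E → ℝ) (hdiff : Differentiable ℝ h) (a v : E) (t : ℝ) :
    HasDerivAt (fun s : ℝ => h (a + s • v)) ⟪gradient h (a + t • v), v⟫ t := by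
  have h1 : HasFDerivAt h (toDual ℝ E (gradient h (a + t • v))) (a + t • v) :=
    (hdiff (a + t • v)).hasGradientAt
  have h2 : HasDerivAt (fun s : ℝ => a + s • v) v t := by
    simpa using ((hasDerivAt_id t).smul_const v).const_add a
  simpa [Function.comp_def] using h1.comp_hasDerivAt t h2

/-- Convexity gradient inequality: `h y ≥ h x + ⟪∇h x, y - x⟫`. -/
lemma convex_grad_ineq (h : E → ℝ) (hconv : ConvexOn ℝ Set.univ h)
    (hdiff : Differentiable ℝ h) (x y : E) :
    h x + ⟪gradient h x, y - x⟫ ≤ h y := by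
  set φ : ℝ → ℝ := fun s => h (x + s • (y - x)) with hφ
  have hder : HasDerivAt φ ⟪gradient h x, y - x⟫ 0 := by
    simpa using line_hasDerivAt h hdiff x (y - x) 0
  have hφconv : ConvexOn ℝ Set.univ φ := by
    have hc := hconv.comp_affineMap (AffineMap.lineMap x y : ℝ →ᵃ[ℝ] E)
    have he : φ = h ∘ (AffineMap.lineMap x y : ℝ →ᵃ[ℝ] E) := by
      funext s
      simp [hφ, AffineMap.lineMap_apply, add_comm]
    rw [he]
    simpa using hc
  -- slope inequality
  have hslope := hφconv.le_slope_of_hasDerivAt (Set.mem_univ (0:ℝ)) (Set.mem_univ (1:ℝ))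
    one_pos hder
  have : slope φ 0 1 = φ 1 - φ 0 := by simp [slope_def_field]
  rw [this] at hslope
  have h0 : φ 0 = h x := by simp [hφ]
  have h1 : φ 1 = h y := by simp [hφ]
  rw [h0, h1] at hslope
  linarith

/-- Descent lemma: with 1-Lipschitz gradient, `h y ≤ h x + ⟪∇h x, y - x⟫ + ½‖y-x‖²`. -/
lemma descent_lemma (h : E → ℝ) (hdiff : Differentiable ℝ h)
    (hlip : ∀ x y : E, ‖gradient h x - gradient h y‖ ≤ ‖x - y‖) (x y : E) :
    h y ≤ h x + ⟪gradient h x, y - x⟫ + ‖y - x‖ ^ 2 / 2 := by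
  set v := y - x with hv
  set φ : ℝ → ℝ := fun s => h (x + s • v) with hφ
  set ψ : ℝ → ℝ := fun s => φ s - s * ⟪gradient h x, v⟫ - s ^ 2 / 2 * ‖v‖ ^ 2 with hψ
  have hψder : ∀ t : ℝ, HasDerivAt ψ
      (⟪gradient h (x + t • v), v⟫ - ⟪gradient h x, v⟫ - t * ‖v‖ ^ 2) t := by
    intro t
    have h1 := line_hasDerivAt h hdiff x v t
    have h2 : HasDerivAt (fun s : ℝ => s * ⟪gradient h x, v⟫) ⟪gradient h x, v⟫ t := by
      simpa using (hasDerivAt_id t).mul_const ⟪gradient h x, v⟫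
    have h3 : HasDerivAt (fun s : ℝ => s ^ 2 / 2 * ‖v‖ ^ 2) (t * ‖v‖ ^ 2) t := by
      have := ((hasDerivAt_pow 2 t).div_const 2).mul_const (‖v‖ ^ 2)
      simpa using this
    exact (h1.sub h2).sub h3
  have hψmono : ψ 1 ≤ ψ 0 := by
    have hanti : AntitoneOn ψ (Set.Icc (0:ℝ) 1) := by
      apply antitoneOn_of_deriv_nonpos (convex_Icc 0 1)
      · exact Continuous.continuousOn (by
          have : Continuous φ := (hdiff.continuous).comp (by continuity)
          fun_prop)
      · intro t _
        exact (hψder t).differentiableAt.differentiableWithinAt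
      · intro t ht
        rw [interior_Icc] at ht
        rw [(hψder t).deriv]
        have hbd : ⟪gradient h (x + t • v) - gradient h x, v⟫ ≤ t * ‖v‖ ^ 2 := by
          calc ⟪gradient h (x + t • v) - gradient h x, v⟫
              ≤ ‖gradient h (x + t • v) - gradient h x‖ * ‖v‖ :=
                real_inner_le_norm _ _
            _ ≤ ‖(x + t • v) - x‖ * ‖v‖ := by
                have := hlip (x + t • v) x
                exact mul_le_mul_of_nonneg_right this (norm_nonneg v)
            _ = |t| * ‖v‖ * ‖v‖ := by rw [add_sub_cancel_left, norm_smul]; simp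
            _ = t * ‖v‖ ^ 2 := by rw [abs_of_pos ht.1]; ring
        have := inner_sub_left (𝕜 := ℝ) (gradient h (x + t • v)) (gradient h x) v
        linarith [hbd, this.symm ▸ hbd]
    exact hanti (by norm_num) (by norm_num) zero_le_one
  have h0 : ψ 0 = h x := by simp [hψ, hφ]
  have h1 : ψ 1 = h y - ⟪gradient h x, v⟫ - ‖v‖ ^ 2 / 2 := by
    simp [hψ, hφ, hv]
    ring
  rw [h0, h1] at hψmono
  linarith

end Aux

/-- If `h : E → ℝ` is convex and differentiable with `h 0 = 0` and `1`-Lipschitz gradient,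
then the unit-step gradient descent point `x⁺ = x - ∇h x` satisfies
`2 h(x⁺) + ‖x⁺‖² ≤ ‖x‖²`. -/
theorem gradient_descent_step_inequality
    {E : Type*} [NormedAddCommGroup E] [InnerProductSpace ℝ E] [CompleteSpace E]
    (h : E → ℝ) (hconv : ConvexOn ℝ Set.univ h) (hdiff : Differentiable ℝ h)
    (h0 : h 0 = 0)
    (hlip : ∀ x y : E, ‖gradient h x - gradient h y‖ ≤ ‖x - y‖) :
    ∀ x : E, 2 * h (x - gradient h x) + ‖x - gradient h x‖ ^ 2 ≤ ‖x‖ ^ 2 := by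
  intro x
  set g := gradient h x with hg
  have hcv : h x + inner ℝ g (0 - x) ≤ h 0 := convex_grad_ineq h hconv hdiff x 0
  have hdl : h (x - g) ≤ h x + inner ℝ g ((x - g) - x) + ‖(x - g) - x‖ ^ 2 / 2 :=
    descent_lemma h hdiff hlip x (x - g)
  have e1 : ((x - g) - x) = -g := by abel
  have e2 : ((0 : E) - x) = -x := by abel
  rw [e1] at hdl
  rw [e2] at hcv
  have i1 : (inner ℝ g (-g) : ℝ) = -‖g‖ ^ 2 := by
    rw [inner_neg_right, real_inner_self_eq_norm_sq]
  have i2 : (inner ℝ g (-x) : ℝ) = -inner ℝ g x := inner_neg_right g x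
  rw [i1, norm_neg] at hdl
  rw [i2, h0] at hcv
  have hnorm : ‖x - g‖ ^ 2 = ‖x‖ ^ 2 - 2 * inner ℝ x g + ‖g‖ ^ 2 := by
    rw [norm_sub_pow_two_real]
  have hsymm : (inner ℝ x g : ℝ) = inner ℝ g x := real_inner_comm g x
  rw [hnorm, hsymm]
  linarith
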